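/- The rational function R_n(z) (the n-level truncated continued fraction with partial quotients 2z) has residue sin²(jπ/(n+1))/(n+1) at its pole z_j = i cos(jπ/(n+1)), for each j = 1, ..., n. -/

import Mathlib

open Complex Real Filter

/-- The truncated continued fraction: R 1 z = 1/(2z), R (k+1) z = 1/(2z + R k z). -/
noncomputable def cfR : ℕ → ℂ → ℂ
  | 0, _ => 0
  | 1, z => 1 / (2 * z)
  | n + 2, z => 1 / (2 * z + cfR (n + 1) z)

open Polynomial Polynomial.Chebyshev

/-- `pg k z = I^k * U_k(-I z)`, the denominator polynomials of the continued fraction. -/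
noncomputable def pg (k : ℕ) (z : ℂ) : ℂ := I ^ k * Polynomial.eval (-I * z) (U ℂ (k : ℤ))

lemma pg_zero (z : ℂ) : pg 0 z = 1 := by simp [pg, U_zero]

lemma pg_one (z : ℂ) : pg 1 z = 2 * z := by
  simp only [pg, Nat.cast_one, U_one, eval_mul, eval_ofNat, eval_X, pow_one]
  have h : (I:ℂ) * (2 * (-I * z)) = -(I * I) * (2 * z) := by ring
  rw [h, Complex.I_mul_I]; ring

lemma pg_rec (k : ℕ) (z : ℂ) : pg (k + 2) z = 2 * z * pg (k + 1) z + pg k z := by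
  have h : U ℂ ((k : ℤ) + 2) = 2 * X * U ℂ ((k : ℤ) + 1) - U ℂ (k : ℤ) := U_add_two ℂ (k : ℤ)
  simp only [pg]
  push_cast
  rw [h]
  simp only [eval_sub, eval_mul, eval_ofNat, eval_X]
  have hI : (I:ℂ)^(k+2) = -(I^k) := by
    rw [pow_add, Complex.I_sq]; ring
  have hI1 : (I:ℂ)^(k+1) = I^k * I := by rw [pow_succ]
  rw [hI, hI1]; ring

lemma cfR_eq_pg (n : ℕ) (z : ℂ) (h : ∀ k, 1 ≤ k → k ≤ n + 1 → pg k z ≠ 0) :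
    cfR (n + 1) z = pg n z / pg (n + 1) z := by
  induction n with
  | zero =>
    show 1 / (2 * z) = _
    rw [pg_zero, pg_one]
  | succ m ih =>
    have ih' := ih (fun k h1 h2 => h k h1 (by omega))
    show 1 / (2 * z + cfR (m + 1) z) = _
    rw [ih', pg_rec]
    have h1 : pg (m + 1) z ≠ 0 := h (m + 1) (by omega) (by omega)
    have h2 : 2 * z * pg (m + 1) z + pg m z ≠ 0 := by
      rw [← pg_rec]; exact h (m + 2) (by omega) (by omega)
    field_simp

lemma U_ne_zero' (k : ℕ) : U ℂ (k : ℤ) ≠ 0 := by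
  intro h0
  have hk : ((k : ℂ) + 1) ≠ 0 := Nat.cast_add_one_ne_zero k
  have hθ : (((k : ℤ) : ℂ) + 1) * ((π / (2 * (k + 1)) : ℝ) : ℂ) = ((π / 2 : ℝ) : ℂ) := by
    push_cast
    field_simp
  have h := U_complex_cos ((π / (2 * (k + 1)) : ℝ) : ℂ) (k : ℤ)
  rw [h0, hθ] at h
  simp only [eval_zero, zero_mul] at h
  rw [← Complex.ofReal_sin, Real.sin_pi_div_two] at h
  exact one_ne_zero h.symm

/-- eventual nonvanishing of a polynomial along `-I * z` near a point, in punctured nbhd. -/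
lemma eventually_ne_root (P : Polynomial ℂ) (hP : P ≠ 0) (w : ℂ) :
    ∀ᶠ z in nhdsWithin w {w}ᶜ, Polynomial.eval (-I * z) P ≠ 0 := by
  have hfin : Set.Finite {x : ℂ | Polynomial.eval (-I * x) P = 0} := by
    have hsub : {x : ℂ | Polynomial.eval (-I * x) P = 0} ⊆
        (fun x : ℂ => -I * x) ⁻¹' {y : ℂ | P.IsRoot y} := fun x hx => hx
    refine Set.Finite.subset (Set.Finite.preimage ?_ (P.finite_setOf_isRoot hP)) hsub
    intro a _ b _ hab
    have hI : (-I : ℂ) ≠ 0 := by simpa using Complex.I_ne_zero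
    exact mul_left_cancel₀ hI hab
  have hclosed : IsClosed ({x : ℂ | Polynomial.eval (-I * x) P = 0} \ {w}) :=
    (hfin.subset Set.diff_subset).isClosed
  have hmem : ({x : ℂ | Polynomial.eval (-I * x) P = 0} \ {w})ᶜ ∈ nhdsWithin w {w}ᶜ := by
    apply nhdsWithin_le_nhds
    exact hclosed.isOpen_compl.mem_nhds (by simp)
  filter_upwards [hmem, self_mem_nhdsWithin] with z hz hz'
  intro h0
  exact hz ⟨h0, hz'⟩

lemma pg_eventually_ne (k : ℕ) (w : ℂ) :
    ∀ᶠ z in nhdsWithin w {w}ᶜ, pg k z ≠ 0 := by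
  filter_upwards [eventually_ne_root (U ℂ (k : ℤ)) (U_ne_zero' k) w] with z hz
  exact mul_ne_zero (pow_ne_zero _ Complex.I_ne_zero) hz

theorem cfR_residue (n : ℕ) (hn : 1 ≤ n) (j : ℕ) (hj : j ∈ Finset.Icc 1 n) :
    Tendsto (fun z : ℂ => (z - I * Real.cos (j * π / (n + 1))) * cfR n z)
      (nhdsWithin (I * Real.cos (j * π / (n + 1)))
        {(I * Real.cos (j * π / (n + 1)) : ℂ)}ᶜ)
      (nhds ((Real.sin (j * π / (n + 1)) ^ 2 / (n + 1) : ℝ) : ℂ)) := by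
  obtain ⟨m, rfl⟩ : ∃ m, n = m + 1 := ⟨n - 1, (Nat.succ_pred_eq_of_pos hn).symm⟩
  obtain ⟨hj1, hjn⟩ := Finset.mem_Icc.mp hj
  set n : ℕ := m + 1 with hndef
  set θ : ℝ := j * π / (n + 1) with hθdef
  set w : ℂ := I * (Real.cos θ : ℂ) with hwdef
  have hπ := Real.pi_pos
  have hθ0 : 0 < θ := by
    apply div_pos (by positivity)
    positivity
  have hθπ : θ < π := by
    rw [hθdef, div_lt_iff₀ (by positivity)]
    have : (j : ℝ) < n + 1 := by exact_mod_cast Nat.lt_succ_of_le hjn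
    nlinarith
  have hsθ : Real.sin θ ≠ 0 := ne_of_gt (Real.sin_pos_of_pos_of_lt_pi hθ0 hθπ)
  have hsθC : ((Real.sin θ : ℝ) : ℂ) ≠ 0 := by exact_mod_cast hsθ
  have hmw : -I * w = (Real.cos θ : ℂ) := by
    rw [hwdef]
    have h2 : -I * (I * (Real.cos θ : ℂ)) = -(I * I) * (Real.cos θ : ℂ) := by ring
    rw [h2, Complex.I_mul_I]; ring
  have hnC : ((n : ℂ) + 1) ≠ 0 := Nat.cast_add_one_ne_zero n
  -- (n+1) θ = j π
  have hn1θR : ((n : ℝ) + 1) * θ = (j : ℝ) * π := by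
    have hnR : ((n : ℝ) + 1) ≠ 0 := by positivity
    rw [hθdef]
    field_simp
  have hn1θ : ((n : ℂ) + 1) * (θ : ℂ) = (((j : ℝ) * π : ℝ) : ℂ) := by
    exact_mod_cast congrArg (fun x : ℝ => (x : ℂ)) hn1θR
  have hnθ : (n : ℂ) * (θ : ℂ) = (((j : ℝ) * π - θ : ℝ) : ℂ) := by
    push_cast
    push_cast at hn1θ
    linear_combination hn1θ
  -- U_n(cos θ) = 0
  have hUn : Polynomial.eval ((Real.cos θ : ℝ) : ℂ) (U ℂ (n : ℤ)) = 0 := by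
    have h := U_complex_cos ((θ : ℝ) : ℂ) (n : ℤ)
    rw [← Complex.ofReal_cos, ← Complex.ofReal_sin] at h
    have h2 : (((n : ℤ) : ℂ) + 1) * ((θ : ℝ) : ℂ) = (((j : ℝ) * π : ℝ) : ℂ) := by
      push_cast; push_cast at hn1θ; linear_combination hn1θ
    rw [h2, ← Complex.ofReal_sin, Real.sin_nat_mul_pi] at h
    simp only [Complex.ofReal_zero] at h
    exact (mul_eq_zero.mp h).resolve_right hsθC
  -- U_{n-1}(cos θ) = (-1)^(j+1)
  have hUn1 : Polynomial.eval ((Real.cos θ : ℝ) : ℂ) (U ℂ ((m : ℕ) : ℤ)) = (-1) ^ (j + 1) := by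
    have h := U_complex_cos ((θ : ℝ) : ℂ) ((m : ℕ) : ℤ)
    rw [← Complex.ofReal_cos, ← Complex.ofReal_sin] at h
    have h2 : ((((m : ℕ) : ℤ) : ℂ) + 1) * ((θ : ℝ) : ℂ) = (((j : ℝ) * π - θ : ℝ) : ℂ) := by
      have hnm : (n : ℂ) = (m : ℂ) + 1 := by simp [hndef]
      push_cast; push_cast at hnθ; linear_combination hnθ - (θ : ℂ) * hnm
    rw [h2, ← Complex.ofReal_sin, Real.sin_nat_mul_pi_sub] at h
    have h3 : Polynomial.eval ((Real.cos θ : ℝ) : ℂ) (U ℂ ((m : ℕ) : ℤ)) * ((Real.sin θ : ℝ) : ℂ)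
        = (-1) ^ (j + 1) * ((Real.sin θ : ℝ) : ℂ) := by
      rw [h]; push_cast; ring
    exact mul_right_cancel₀ hsθC h3
  -- T_{n+1}(cos θ) = (-1)^j
  have hTn1 : Polynomial.eval ((Real.cos θ : ℝ) : ℂ) (T ℂ ((n : ℤ) + 1)) = (-1) ^ j := by
    have h := T_complex_cos ((θ : ℝ) : ℂ) ((n : ℤ) + 1)
    rw [← Complex.ofReal_cos] at h
    have h2 : ((((n : ℤ) + 1 : ℤ) : ℂ)) * ((θ : ℝ) : ℂ) = (((j : ℝ) * π : ℝ) : ℂ) := by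
      push_cast; push_cast at hn1θ; linear_combination hn1θ
    rw [h2, ← Complex.ofReal_cos] at h
    rw [h]
    have hc : Real.cos ((j : ℝ) * π) = (-1) ^ j := by
      simpa using Real.cos_nat_mul_pi_sub 0 j
    rw [hc]; push_cast; ring
  -- derivative value:  sin²θ * U_n'(cos θ) = -(n+1) * (-1)^j
  set D : ℂ := Polynomial.eval ((Real.cos θ : ℝ) : ℂ) (derivative (U ℂ (n : ℤ))) with hDdef
  have hderiv_key : ((Real.sin θ : ℝ) : ℂ) ^ 2 * D = -(((n : ℂ) + 1) * (-1) ^ j) := by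
    have h := congrArg (Polynomial.eval ((Real.cos θ : ℝ) : ℂ))
      (add_one_mul_T_eq_poly_in_U (R := ℂ) (n : ℤ))
    simp only [eval_mul, eval_add, eval_sub, eval_one, eval_pow, eval_X, eval_intCast] at h
    rw [hTn1, hUn] at h
    have hsc : ((Real.sin θ : ℝ) : ℂ) ^ 2 = 1 - ((Real.cos θ : ℝ) : ℂ) ^ 2 := by
      have h2 : ((Real.sin θ) ^ 2 + (Real.cos θ) ^ 2 : ℝ) = 1 := Real.sin_sq_add_cos_sq θ
      have h3 : ((Real.sin θ : ℝ) : ℂ) ^ 2 + ((Real.cos θ : ℝ) : ℂ) ^ 2 = 1 := by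
        exact_mod_cast congrArg (fun x : ℝ => (x : ℂ)) h2
      linear_combination h3
    rw [hDdef, hsc]
    push_cast at h ⊢
    linear_combination h
  have hD0 : D ≠ 0 := by
    intro h0
    rw [h0, mul_zero] at hderiv_key
    have hne : ((n : ℂ) + 1) * (-1) ^ j ≠ 0 :=
      mul_ne_zero hnC (pow_ne_zero _ (by norm_num))
    exact hne (neg_eq_zero.mp hderiv_key.symm)
  set d : ℂ := I ^ n * (-I) * D with hddef
  have hd0 : d ≠ 0 := by
    rw [hddef]
    exact mul_ne_zero (mul_ne_zero (pow_ne_zero _ Complex.I_ne_zero)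
      (by simpa using Complex.I_ne_zero)) hD0
  have hpw : pg n w = 0 := by
    rw [pg, hmw, hUn, mul_zero]
  have hderiv : HasDerivAt (pg n) d w := by
    have h1 : HasDerivAt (fun z : ℂ => -I * z) (-I) w := by
      simpa using (hasDerivAt_id w).const_mul (-I)
    have h2 : HasDerivAt (fun z : ℂ => Polynomial.eval (-I * z) (U ℂ (n : ℤ)))
        (Polynomial.eval (-I * w) (derivative (U ℂ (n : ℤ))) * (-I)) w :=
      (Polynomial.hasDerivAt (U ℂ (n : ℤ)) (-I * w)).comp w h1
    have h3 := h2.const_mul ((I : ℂ) ^ n)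
    rw [hmw] at h3
    have e : d = I ^ n * (Polynomial.eval ((Real.cos θ : ℝ) : ℂ) (derivative (U ℂ (n : ℤ))) * -I) := by
      rw [hddef, hDdef]; ring
    rw [e]; exact h3
  -- limit of the difference quotient
  have hslope : Tendsto (fun z : ℂ => pg n z / (z - w)) (nhdsWithin w {w}ᶜ) (nhds d) := by
    have h := hasDerivAt_iff_tendsto_slope.mp hderiv
    apply h.congr
    intro z
    rw [slope_def_field, hpw, sub_zero]
  -- limit of the numerator
  have hnum : Tendsto (fun z : ℂ => pg m z) (nhdsWithin w {w}ᶜ) (nhds (pg m w)) := by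
    apply Filter.Tendsto.mono_left _ nhdsWithin_le_nhds
    apply Continuous.tendsto
    have : Continuous fun z : ℂ => I ^ m * Polynomial.eval (-I * z) (U ℂ ((m : ℕ) : ℤ)) :=
      continuous_const.mul ((U ℂ ((m : ℕ) : ℤ)).continuous.comp
        (continuous_const.mul continuous_id))
    exact this
  have hlim : Tendsto (fun z : ℂ => pg m z / (pg n z / (z - w)))
      (nhdsWithin w {w}ᶜ) (nhds (pg m w / d)) := hnum.div hslope hd0
  -- value of the limit
  have hval : pg m w / d = ((Real.sin θ ^ 2 / (n + 1) : ℝ) : ℂ) := by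
    have hpgm : pg m w = I ^ m * (-1) ^ (j + 1) := by rw [pg, hmw, hUn1]
    have hdval : d = I ^ m * D := by
      have hii : (I : ℂ) * -I = 1 := by
        have h2 := Complex.I_mul_I
        linear_combination -h2
      rw [hddef, hndef, pow_succ]
      linear_combination I ^ m * D * hii
    have hcast : ((Real.sin θ ^ 2 / (n + 1) : ℝ) : ℂ)
        = ((Real.sin θ ^ 2 : ℝ) : ℂ) / ((n : ℂ) + 1) := by
      push_cast
      ring
    rw [hpgm, hdval, mul_div_mul_left _ _ (pow_ne_zero _ Complex.I_ne_zero), hcast]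
    rw [div_eq_div_iff hD0 hnC, Complex.ofReal_pow]
    linear_combination -hderiv_key
  -- eventual equality of the two functions
  have heq : ∀ᶠ z in nhdsWithin w {w}ᶜ,
      (z - w) * cfR n z = pg m z / (pg n z / (z - w)) := by
    have hall : ∀ᶠ z in nhdsWithin w {w}ᶜ, ∀ k ∈ Finset.Icc 1 n, pg k z ≠ 0 := by
      rw [eventually_all_finset]
      intro k _
      exact pg_eventually_ne k w
    filter_upwards [hall, self_mem_nhdsWithin] with z hz hz'
    have hzw : z - w ≠ 0 := sub_ne_zero.mpr hz'
    have hpn : pg n z ≠ 0 := hz n (Finset.mem_Icc.mpr ⟨by omega, le_refl n⟩)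
    have hcf : cfR n z = pg m z / pg n z := by
      apply cfR_eq_pg m z
      intro k h1 h2
      exact hz k (Finset.mem_Icc.mpr ⟨h1, h2⟩)
    rw [hcf, div_div_eq_mul_div]
    field_simp
  rw [← hval]
  exact hlim.congr' (heq.mono fun z hz => hz.symm)
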